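/- For every real α > 1, the probability that G(n, n^{−α}) is a forest (contains no cycle) tends to 1 as n → ∞. -/

import Mathlib

instance {V : Type} [Finite V] : Finite (SimpleGraph V) :=
  Finite.of_injective (fun G => G.Adj) fun _ _ h => SimpleGraph.ext h

noncomputable def edgeCount {n : ℕ} (H : SimpleGraph (Fin n)) : ℕ := H.edgeSet.ncard

open Classical in
/-- The probability that the Erdős–Rényi random graph `G(n,p)` (each of the
`n.choose 2` possible edges present independently with probability `p`)
satisfies the property `Q`. -/
noncomputable def graphProb (n : ℕ) (p : ℝ) (Q : SimpleGraph (Fin n) → Prop) : ℝ :=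
  haveI : Fintype (SimpleGraph (Fin n)) := Fintype.ofFinite _
  ∑ H : SimpleGraph (Fin n),
    if Q H then p ^ edgeCount H * (1 - p) ^ (n.choose 2 - edgeCount H) else 0

open Finset SimpleGraph
open scoped Classical

theorem sum_powerset_one {β : Type} [DecidableEq β] (s : Finset β) (p : ℝ) :
    ∑ t ∈ s.powerset, p ^ t.card * (1 - p) ^ (s.card - t.card) = 1 := by
  have h := Finset.prod_add (fun _ : β => p) (fun _ => 1 - p) s
  simp only [add_sub_cancel, Finset.prod_const, Finset.prod_const_one, one_pow] at h
  refine (Finset.sum_congr rfl ?_).trans h.symm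
  intro t ht
  rw [Finset.mem_powerset] at ht
  rw [Finset.card_sdiff_of_subset ht]

noncomputable def edgeSlots (n : ℕ) : Finset (Sym2 (Fin n)) :=
  Finset.univ.filter fun e => ¬ e.IsDiag

lemma card_edgeSlots (n : ℕ) : (edgeSlots n).card = n.choose 2 := by
  have := Sym2.card_subtype_not_diag (α := Fin n)
  rw [Fintype.card_subtype] at this
  simpa [edgeSlots] using this

noncomputable def eF {n : ℕ} (H : SimpleGraph (Fin n)) : Finset (Sym2 (Fin n)) :=
  H.edgeSet.toFinset

lemma eF_mem_powerset {n : ℕ} (H : SimpleGraph (Fin n)) : eF H ∈ (edgeSlots n).powerset := by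
  rw [Finset.mem_powerset]
  intro e he
  rw [eF, Set.mem_toFinset] at he
  simp only [edgeSlots, Finset.mem_filter, Finset.mem_univ, true_and]
  exact H.not_isDiag_of_mem_edgeSet he

lemma from_eF {n : ℕ} (H : SimpleGraph (Fin n)) : SimpleGraph.fromEdgeSet ↑(eF H) = H := by
  rw [eF]; simp

lemma eF_from {n : ℕ} (t : Finset (Sym2 (Fin n))) (ht : t ∈ (edgeSlots n).powerset) :
    eF (SimpleGraph.fromEdgeSet ↑t) = t := by
  rw [Finset.mem_powerset] at ht
  have hset : (SimpleGraph.fromEdgeSet (↑t : Set (Sym2 (Fin n)))).edgeSet = ↑t := by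
    rw [SimpleGraph.edgeSet_fromEdgeSet]
    rw [_root_.sdiff_eq_self_iff_disjoint, Set.disjoint_left]
    intro e hed het
    have := ht het
    simp [edgeSlots] at this
    exact this hed
  apply Finset.coe_injective
  rw [eF, Set.coe_toFinset, hset]

lemma edgeCount_eq {n : ℕ} (H : SimpleGraph (Fin n)) : edgeCount H = (eF H).card := by
  rw [edgeCount, eF, Set.ncard_eq_toFinset_card']

lemma sum_graphs_eq {n : ℕ} [Fintype (SimpleGraph (Fin n))] (f : SimpleGraph (Fin n) → ℝ) :
    ∑ H : SimpleGraph (Fin n), f H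
      = ∑ t ∈ (edgeSlots n).powerset, f (SimpleGraph.fromEdgeSet ↑t) := by
  apply Finset.sum_bij' (fun H _ => eF H) (fun t ht => SimpleGraph.fromEdgeSet ↑t)
  · intro H _; exact eF_mem_powerset H
  · intros; apply Finset.mem_univ
  · intro H _; exact from_eF H
  · intro t ht; exact eF_from t ht
  · intro H _; rw [from_eF]

lemma edgeSet_from {n : ℕ} (t : Finset (Sym2 (Fin n))) (ht : t ⊆ edgeSlots n) :
    (SimpleGraph.fromEdgeSet (↑t : Set (Sym2 (Fin n)))).edgeSet = ↑t := by
  have := eF_from t (Finset.mem_powerset.2 ht)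
  rw [eF] at this
  conv_rhs => rw [← this]
  rw [Set.coe_toFinset]

lemma sum_filter_superset {n : ℕ} (p : ℝ) (S : Finset (Sym2 (Fin n))) (hS : S ⊆ edgeSlots n) :
    ∑ t ∈ (edgeSlots n).powerset.filter (fun t => S ⊆ t),
      p ^ t.card * (1 - p) ^ (n.choose 2 - t.card) = p ^ S.card := by
  have key : ∑ t ∈ (edgeSlots n).powerset.filter (fun t => S ⊆ t),
      p ^ t.card * (1 - p) ^ (n.choose 2 - t.card)
      = ∑ u ∈ (edgeSlots n \ S).powerset,
          p ^ S.card * (p ^ u.card * (1 - p) ^ ((edgeSlots n \ S).card - u.card)) := by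
    apply Finset.sum_bij' (fun t _ => t \ S) (fun u _ => S ∪ u)
    · intro t ht
      simp only [Finset.mem_filter, Finset.mem_powerset] at ht
      exact Finset.mem_powerset.2 (Finset.sdiff_subset_sdiff ht.1 le_rfl)
    · intro u hu
      rw [Finset.mem_powerset] at hu
      simp only [Finset.mem_filter, Finset.mem_powerset]
      constructor
      · exact Finset.union_subset hS (hu.trans (Finset.sdiff_subset))
      · exact Finset.subset_union_left
    · intro t ht
      simp only [Finset.mem_filter, Finset.mem_powerset] at ht
      exact (Finset.union_sdiff_of_subset ht.2).symm ▸ rfl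
    · intro u hu
      rw [Finset.mem_powerset] at hu
      have hdisj : Disjoint S u :=
        (Finset.sdiff_disjoint (s := S) (t := edgeSlots n)).symm.mono_right hu
      exact Finset.union_sdiff_cancel_left hdisj
    · intro t ht
      simp only [Finset.mem_filter, Finset.mem_powerset] at ht
      have h1 : S.card ≤ t.card := Finset.card_le_card ht.2
      have h2 : t.card ≤ (edgeSlots n).card := Finset.card_le_card ht.1
      have h3 : (t \ S).card = t.card - S.card := Finset.card_sdiff_of_subset ht.2
      have h4 : (edgeSlots n \ S).card = (edgeSlots n).card - S.card := Finset.card_sdiff_of_subset hS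
      have e1 : S.card + (t.card - S.card) = t.card := by omega
      have e2 : (edgeSlots n).card - S.card - (t.card - S.card) = (edgeSlots n).card - t.card := by
        omega
      rw [← card_edgeSlots n, h3, h4, ← mul_assoc, ← pow_add, e1, e2]
  rw [key, ← Finset.mul_sum, sum_powerset_one, mul_one]

lemma graphProb_eq (n : ℕ) (p : ℝ) (Q : SimpleGraph (Fin n) → Prop) :
    graphProb n p Q = ∑ t ∈ (edgeSlots n).powerset,
      (if Q (SimpleGraph.fromEdgeSet ↑t) then p ^ t.card * (1 - p) ^ (n.choose 2 - t.card)
       else 0) := by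
  unfold graphProb
  have huniv : @Finset.univ (SimpleGraph (Fin n)) (Fintype.ofFinite _)
      = @Finset.univ (SimpleGraph (Fin n)) _ := by
    congr 1
    exact Subsingleton.elim _ _
  rw [huniv]
  refine (sum_graphs_eq _).trans ?_
  apply Finset.sum_congr rfl
  intro t ht
  have hc : edgeCount (SimpleGraph.fromEdgeSet (↑t : Set (Sym2 (Fin n)))) = t.card := by
    rw [edgeCount_eq, eF_from t ht]
  rw [hc]

lemma graphProb_add_compl (n : ℕ) (p : ℝ) (Q : SimpleGraph (Fin n) → Prop) :
    graphProb n p Q + graphProb n p (fun H => ¬ Q H) = 1 := by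
  rw [graphProb_eq, graphProb_eq, ← Finset.sum_add_distrib]
  refine Eq.trans ?_ (sum_powerset_one (edgeSlots n) p)
  apply Finset.sum_congr rfl
  intro t ht
  rw [card_edgeSlots]
  by_cases h : Q (SimpleGraph.fromEdgeSet (↑t : Set (Sym2 (Fin n)))) <;> simp [h]

lemma graphProb_nonneg {n : ℕ} {p : ℝ} (hp0 : 0 ≤ p) (hp1 : p ≤ 1)
    (Q : SimpleGraph (Fin n) → Prop) : 0 ≤ graphProb n p Q := by
  rw [graphProb_eq]
  apply Finset.sum_nonneg
  intro t ht
  have hnn : (0:ℝ) ≤ p ^ t.card * (1 - p) ^ (n.choose 2 - t.card) :=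
    mul_nonneg (pow_nonneg hp0 _) (pow_nonneg (by linarith) _)
  split
  · exact hnn
  · exact le_rfl

lemma graphProb_le_sum {n : ℕ} {p : ℝ} (hp0 : 0 ≤ p) (hp1 : p ≤ 1) {ι : Type}
    (I : Finset ι) (A : ι → SimpleGraph (Fin n) → Prop) (Q : SimpleGraph (Fin n) → Prop)
    (hcov : ∀ H, Q H → ∃ i ∈ I, A i H) :
    graphProb n p Q ≤ ∑ i ∈ I, graphProb n p (A i) := by
  simp only [graphProb_eq]
  rw [Finset.sum_comm]
  apply Finset.sum_le_sum
  intro t ht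
  have hnn : (0:ℝ) ≤ p ^ t.card * (1 - p) ^ (n.choose 2 - t.card) :=
    mul_nonneg (pow_nonneg hp0 _) (pow_nonneg (by linarith) _)
  have hterm : ∀ i : ι, 0 ≤ (if A i (SimpleGraph.fromEdgeSet (↑t : Set (Sym2 (Fin n)))) then
      p ^ t.card * (1 - p) ^ (n.choose 2 - t.card) else 0) := by
    intro i
    split
    · exact hnn
    · exact le_rfl
  by_cases h : Q (SimpleGraph.fromEdgeSet (↑t : Set (Sym2 (Fin n))))
  · obtain ⟨i0, hi0, hAi0⟩ := hcov _ h
    rw [if_pos h]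
    calc p ^ t.card * (1 - p) ^ (n.choose 2 - t.card)
        = if A i0 (SimpleGraph.fromEdgeSet ↑t) then
            p ^ t.card * (1 - p) ^ (n.choose 2 - t.card) else 0 := by rw [if_pos hAi0]
      _ ≤ _ := Finset.single_le_sum (fun i _ => hterm i) hi0
  · rw [if_neg h]
    exact Finset.sum_nonneg fun i _ => hterm i

lemma graphProb_superset {n : ℕ} (p : ℝ) (S : Finset (Sym2 (Fin n))) (hS : S ⊆ edgeSlots n) :
    graphProb n p (fun H => (↑S : Set (Sym2 (Fin n))) ⊆ H.edgeSet) = p ^ S.card := by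
  rw [graphProb_eq]
  have h1 : ∀ t ∈ (edgeSlots n).powerset,
      (if (↑S : Set (Sym2 (Fin n))) ⊆ (SimpleGraph.fromEdgeSet (↑t : Set (Sym2 (Fin n)))).edgeSet
        then p ^ t.card * (1 - p) ^ (n.choose 2 - t.card) else 0)
      = (if S ⊆ t then p ^ t.card * (1 - p) ^ (n.choose 2 - t.card) else 0) := by
    intro t ht
    rw [Finset.mem_powerset] at ht
    rw [edgeSet_from t ht]
    exact if_congr (by exact_mod_cast Iff.rfl) rfl rfl
  rw [Finset.sum_congr rfl h1, ← Finset.sum_filter]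
  exact sum_filter_superset p S hS

lemma getVert_eq_support_getElem {V : Type} {G : SimpleGraph V} {u v : V} (w : G.Walk u v)
    {i : ℕ} (hi : i < w.support.length) : w.getVert i = w.support[i] := by
  induction w generalizing i with
  | nil =>
    simp only [Walk.support_nil, List.length_cons, List.length_nil] at hi
    interval_cases i
    simp [Walk.getVert_zero]
  | cons h q ih =>
    cases i with
    | zero => simp [Walk.getVert_zero]
    | succ j =>
      simp only [Walk.support_cons, List.length_cons] at hi
      simp only [Walk.getVert_cons_succ, Walk.support_cons]
      rw [List.getElem_cons_succ]
      exact ih (by omega)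

lemma cycle_getVert_inj {V : Type} {G : SimpleGraph V} {v : V} {w : G.Walk v v}
    (hw : w.IsCycle) {a b : ℕ} (ha : a < w.length) (hb : b < w.length)
    (hab : w.getVert a = w.getVert b) : a = b := by
  have h3 := hw.three_le_length
  have hlen : w.support.length = w.length + 1 := w.length_support
  have htl : w.support.tail.length = w.length := by rw [List.length_tail, hlen]; omega
  have hnd := hw.support_nodup
  have hbr : ∀ i (hi : i < w.length), w.getVert (i + 1) = w.support.tail[i]'(by omega) := by
    intro i hi
    rw [getVert_eq_support_getElem w (by omega), List.getElem_tail]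
  have hv : w.getVert 0 = w.support.tail[w.length - 1]'(by omega) := by
    have h1 := hbr (w.length - 1) (by omega)
    rw [show w.length - 1 + 1 = w.length from by omega] at h1
    rw [Walk.getVert_zero, ← h1, Walk.getVert_length]
  rcases Nat.eq_zero_or_pos a with ha0 | ha0 <;> rcases Nat.eq_zero_or_pos b with hb0 | hb0
  · omega
  · subst ha0
    rw [hv] at hab
    have h2 := hbr (b - 1) (by omega)
    rw [show b - 1 + 1 = b from by omega] at h2
    rw [h2] at hab
    rw [List.Nodup.getElem_inj_iff hnd] at hab
    omega
  · subst hb0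
    rw [hv] at hab
    have h2 := hbr (a - 1) (by omega)
    rw [show a - 1 + 1 = a from by omega] at h2
    rw [h2] at hab
    rw [List.Nodup.getElem_inj_iff hnd] at hab
    omega
  · have h2a := hbr (a - 1) (by omega)
    rw [show a - 1 + 1 = a from by omega] at h2a
    have h2b := hbr (b - 1) (by omega)
    rw [show b - 1 + 1 = b from by omega] at h2b
    rw [h2a, h2b, List.Nodup.getElem_inj_iff hnd] at hab
    omega

def nxt {k : ℕ} (i : Fin k) : Fin k := ⟨(i.val + 1) % k, Nat.mod_lt _ i.pos⟩

lemma nxt_val {k : ℕ} (i : Fin k) :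
    (nxt i).val = if i.val + 1 = k then 0 else i.val + 1 := by
  rw [nxt]
  split
  · next h => simp [h]
  · next h => exact Nat.mod_eq_of_lt (by omega)

noncomputable def cycEdges {n k : ℕ} (f : Fin k → Fin n) : Finset (Sym2 (Fin n)) :=
  Finset.image (fun i => s(f i, f (nxt i))) Finset.univ

lemma card_cycEdges {n k : ℕ} (hk3 : 3 ≤ k) (f : Fin k → Fin n)
    (hf : Function.Injective f) : (cycEdges f).card = k := by
  rw [cycEdges, Finset.card_image_of_injective _ ?_, Finset.card_univ, Fintype.card_fin]
  intro i j hij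
  rw [Sym2.eq_iff] at hij
  have hni := nxt_val i
  have hnj := nxt_val j
  rcases hij with ⟨h1, h2⟩ | ⟨h1, h2⟩
  · exact hf h1
  · have e1 : i = nxt j := hf h1
    have e2 : nxt i = j := hf h2
    have hi := i.isLt
    have hj := j.isLt
    have v1 : i.val = (nxt j).val := by rw [e1]
    have v2 : (nxt i).val = j.val := by rw [e2]
    rw [hnj] at v1
    rw [hni] at v2
    apply Fin.ext
    split at v1 <;> split at v2 <;> omega

lemma exists_cycle_struct {n : ℕ} {H : SimpleGraph (Fin n)} (h : ¬ H.IsAcyclic) :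
    ∃ k, 3 ≤ k ∧ k ≤ n ∧ ∃ f : Fin k → Fin n,
      Function.Injective f ∧ ∀ i : Fin k, H.Adj (f i) (f (nxt i)) := by
  rw [SimpleGraph.IsAcyclic] at h
  push_neg at h
  obtain ⟨v, w, hw⟩ := h
  have h3 := hw.three_le_length
  have hlen : w.support.length = w.length + 1 := w.length_support
  have htl : w.support.tail.length = w.length := by rw [List.length_tail, hlen]; omega
  refine ⟨w.length, h3, ?_, fun i => w.getVert i.val, ?_, ?_⟩
  · have := hw.support_nodup.length_le_card
    rw [htl, Fintype.card_fin] at this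
    exact this
  · intro i j hij
    exact Fin.ext (cycle_getVert_inj hw i.isLt j.isLt hij)
  · intro i
    have hnv := nxt_val i
    have hi := i.isLt
    simp only []
    by_cases hc : i.val + 1 = w.length
    · rw [hnv, if_pos hc, Walk.getVert_zero]
      have ha := w.adj_getVert_succ (i := i.val) (by omega)
      rw [hc, Walk.getVert_length] at ha
      exact ha
    · rw [hnv, if_neg hc]
      exact w.adj_getVert_succ (by omega)

lemma bad_bound {n : ℕ} {p : ℝ} (hp0 : 0 ≤ p) (hp1 : p ≤ 1) :
    graphProb n p (fun H => ¬ H.IsAcyclic) ≤ ∑ k ∈ Finset.Icc 3 n, (n : ℝ) ^ k * p ^ k := by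
  classical
  set I : Finset (Σ k : ℕ, Fin k → Fin n) :=
    (Finset.Icc 3 n).sigma
      (fun k => (Finset.univ : Finset (Fin k → Fin n)).filter fun f => Function.Injective f)
    with hI
  have hcov : ∀ H : SimpleGraph (Fin n), ¬ H.IsAcyclic →
      ∃ i ∈ I, (↑(cycEdges i.2) : Set (Sym2 (Fin n))) ⊆ H.edgeSet := by
    intro H h
    obtain ⟨k, hk3, hkn, f, hinj, hadj⟩ := exists_cycle_struct h
    refine ⟨⟨k, f⟩, ?_, ?_⟩
    · rw [hI, Finset.mem_sigma, Finset.mem_Icc, Finset.mem_filter]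
      exact ⟨⟨hk3, hkn⟩, Finset.mem_univ _, hinj⟩
    · intro e he
      rw [Finset.mem_coe, cycEdges, Finset.mem_image] at he
      obtain ⟨i, _, rfl⟩ := he
      exact (hadj i)
  have hub := graphProb_le_sum hp0 hp1 I
    (fun i H => (↑(cycEdges i.2) : Set (Sym2 (Fin n))) ⊆ H.edgeSet) _ hcov
  refine hub.trans ?_
  rw [hI, Finset.sum_sigma]
  apply Finset.sum_le_sum
  intro k hk
  rw [Finset.mem_Icc] at hk
  have hval : ∀ f ∈ (Finset.univ : Finset (Fin k → Fin n)).filter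
      (fun f => Function.Injective f),
      graphProb n p (fun H => (↑(cycEdges f) : Set (Sym2 (Fin n))) ⊆ H.edgeSet) = p ^ k := by
    intro f hf
    rw [Finset.mem_filter] at hf
    have hinj := hf.2
    have hsub : cycEdges f ⊆ edgeSlots n := by
      intro e he
      rw [cycEdges, Finset.mem_image] at he
      obtain ⟨i, _, rfl⟩ := he
      simp only [edgeSlots, Finset.mem_filter, Finset.mem_univ, true_and, Sym2.isDiag_iff_proj_eq]
      intro hdiag
      have hne : i ≠ nxt i := by
        intro hc
        have hv := congrArg Fin.val hc
        rw [nxt_val] at hv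
        have hlt := i.isLt
        split at hv <;> omega
      exact hne (hinj hdiag)
    rw [graphProb_superset p _ hsub, card_cycEdges hk.1 f hinj]
  rw [Finset.sum_congr rfl hval, Finset.sum_const, nsmul_eq_mul]
  apply mul_le_mul_of_nonneg_right _ (pow_nonneg hp0 k)
  calc ((Finset.filter (fun f => Function.Injective f) Finset.univ).card : ℝ)
      ≤ ((Finset.univ : Finset (Fin k → Fin n)).card : ℝ) := by
        exact_mod_cast Finset.card_filter_le _ _
    _ = (n : ℝ) ^ k := by
        rw [Finset.card_univ, Fintype.card_fun, Fintype.card_fin, Fintype.card_fin]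
        push_cast
        ring

/-- for every real `α > 1`, the probability that `G(n, n^{-α})`
is a forest (contains no cycle) tends to `1`. -/
theorem aas_forest (α : ℝ) (hα : 1 < α) :
    Filter.Tendsto (fun n => graphProb n ((n : ℝ) ^ (-α)) fun H => H.IsAcyclic)
      Filter.atTop (nhds 1) := by
  have hq : Filter.Tendsto (fun n : ℕ => (n:ℝ) ^ (1 - α)) Filter.atTop (nhds 0) := by
    have h := (tendsto_rpow_neg_atTop (show 0 < α - 1 by linarith)).comp
      tendsto_natCast_atTop_atTop (α := ℕ)
    simpa [neg_sub, Function.comp_def] using h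
  have hL : Filter.Tendsto (fun n : ℕ => 1 - 2 * ((n:ℝ) ^ (1 - α)) ^ 3) Filter.atTop
      (nhds 1) := by
    have h2 : Filter.Tendsto (fun n : ℕ => 2 * ((n:ℝ) ^ (1 - α)) ^ 3) Filter.atTop (nhds 0) := by
      have := (hq.pow 3).const_mul (2:ℝ)
      simpa using this
    have := (tendsto_const_nhds (x := (1:ℝ)) (f := Filter.atTop (α := ℕ))).sub h2
    simpa using this
  have hev : ∀ᶠ n : ℕ in Filter.atTop,
      1 - 2 * ((n:ℝ) ^ (1 - α)) ^ 3
        ≤ graphProb n ((n : ℝ) ^ (-α)) (fun H => H.IsAcyclic)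
      ∧ graphProb n ((n : ℝ) ^ (-α)) (fun H => H.IsAcyclic) ≤ 1 := by
    have hhalf := hq.eventually (eventually_le_nhds (show (0:ℝ) < 1/2 by norm_num))
    filter_upwards [Filter.eventually_ge_atTop 1, hhalf] with n hn1 hnq
    have hn0 : (0:ℝ) < (n:ℝ) := by exact_mod_cast hn1
    set p := (n:ℝ) ^ (-α) with hp
    set q := (n:ℝ) ^ (1 - α) with hqd
    have hq0 : 0 ≤ q := Real.rpow_nonneg hn0.le _
    have hp0 : 0 ≤ p := Real.rpow_nonneg hn0.le _
    have hp1 : p ≤ 1 :=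
      Real.rpow_le_one_of_one_le_of_nonpos (by exact_mod_cast hn1) (by linarith)
    have hnp : (n:ℝ) * p = q := by
      rw [hp, hqd]
      nth_rewrite 1 [← Real.rpow_one (n:ℝ)]
      rw [← Real.rpow_add hn0]
      ring_nf
    have hbad := bad_bound (n := n) hp0 hp1
    have hsum : ∑ k ∈ Finset.Icc 3 n, (n : ℝ) ^ k * p ^ k ≤ 2 * q ^ 3 := by
      have hterm : ∀ k ∈ Finset.Icc 3 n, (n : ℝ) ^ k * p ^ k ≤ q ^ 3 * (1/2) ^ (k - 3) := by
        intro k hk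
        rw [Finset.mem_Icc] at hk
        rw [← mul_pow, hnp]
        have : q ^ k = q ^ 3 * q ^ (k - 3) := by
          rw [← pow_add]
          congr 1
          omega
        rw [this]
        exact mul_le_mul_of_nonneg_left
          (pow_le_pow_left₀ hq0 hnq _) (pow_nonneg hq0 3)
      refine (Finset.sum_le_sum hterm).trans ?_
      rw [← Finset.mul_sum]
      rw [show (2 : ℝ) * q ^ 3 = q ^ 3 * 2 by ring]
      apply mul_le_mul_of_nonneg_left _ (pow_nonneg hq0 3)
      rw [show Finset.Icc 3 n = Finset.Ico 3 (n+1) from by rw [Finset.Ico_add_one_right_eq_Icc],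
        Finset.sum_Ico_eq_sum_range]
      have : ∀ i ∈ Finset.range (n + 1 - 3), ((1:ℝ)/2) ^ (3 + i - 3) = (1/2) ^ i := by
        intro i _
        congr 1
        omega
      rw [Finset.sum_congr rfl this]
      exact sum_geometric_two_le _
    have hcompl := graphProb_add_compl n p (fun H => H.IsAcyclic)
    have hbad0 : 0 ≤ graphProb n p (fun H => ¬ H.IsAcyclic) :=
      graphProb_nonneg hp0 hp1 _
    constructor
    · have := hbad.trans hsum
      linarith
    · linarith
  exact tendsto_of_tendsto_of_tendsto_of_le_of_le' hL tendsto_const_nhds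
    (hev.mono fun n h => h.1) (hev.mono fun n h => h.2)
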